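/- arXiv:astro-ph/0409635 — 6 statements merged into one kernel-verified Lean document; each statement's English description precedes it below -/
import Mathlib

section
/- Let E be a real normed vector space, U ⊆ E open, φ : U → (E →L[ℝ] ℝ) a continuous 1-form, λ : U → ℝ a positive C¹ function, and let φ̃ = φ − d ln λ be the gauge-transformed 1-form, i.e. φ̃(x)(v) = φ(x)(v) − λ(x)⁻¹ · (Dλ(x))(v) where Dλ is the Fréchet derivative. For any C¹ curve c : [0,1] → U, if l and l̃ denote the length transfers of φ and φ̃ along c respectively, then for all t ∈ [0,1]: l̃(t) = (λ(c(0)) / λ(c(t))) · l(t). -/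
/-- Transformation law of the length transfer under a gauge transformation
`φ̃ = φ − d ln λ`: the transformed length transfer satisfies
`l̃(t) = (λ(c(0)) / λ(c(t))) · l(t)`. -/
theorem length_transfer_gauge_transformation
    {E : Type*} [NormedAddCommGroup E] [NormedSpace ℝ E]
    (U : Set E) (hU : IsOpen U)
    (φ : E → (E →L[ℝ] ℝ)) (hφ : ContinuousOn φ U)
    (lam : E → ℝ) (Dlam : E → (E →L[ℝ] ℝ))
    (hlam_pos : ∀ x ∈ U, 0 < lam x)
    (hlam_deriv : ∀ x ∈ U, HasFDerivAt lam (Dlam x) x)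
    (hDlam_cont : ContinuousOn Dlam U)
    (φt : E → (E →L[ℝ] ℝ))
    (hφt : ∀ x ∈ U, ∀ v : E, φt x v = φ x v - (lam x)⁻¹ * Dlam x v)
    (c : ℝ → E) (c' : ℝ → E)
    (hcU : ∀ t ∈ Set.Icc (0:ℝ) 1, c t ∈ U)
    (hc : ∀ t ∈ Set.Icc (0:ℝ) 1, HasDerivAt c (c' t) t)
    (hc' : ContinuousOn c' (Set.Icc (0:ℝ) 1))
    (l lt : ℝ → ℝ)
    (hl : ∀ t, l t = Real.exp (∫ τ in (0:ℝ)..t, φ (c τ) (c' τ)))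
    (hlt : ∀ t, lt t = Real.exp (∫ τ in (0:ℝ)..t, φt (c τ) (c' τ))) :
    ∀ t ∈ Set.Icc (0:ℝ) 1, lt t = (lam (c 0) / lam (c t)) * l t := by
  intro t ht
  have hc_cont : ContinuousOn c (Set.Icc (0:ℝ) 1) :=
    fun τ hτ => (hc τ hτ).continuousAt.continuousWithinAt
  have hmaps : Set.MapsTo c (Set.Icc (0:ℝ) 1) U := fun τ hτ => hcU τ hτ
  have hlam_cont : ContinuousOn lam U :=
    fun x hx => (hlam_deriv x hx).differentiableAt.continuousAt.continuousWithinAt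
  -- the function f τ = (lam (c τ))⁻¹ * Dlam (c τ) (c' τ)
  set f : ℝ → ℝ := fun τ => (lam (c τ))⁻¹ * Dlam (c τ) (c' τ) with hf
  have hf_cont : ContinuousOn f (Set.Icc (0:ℝ) 1) := by
    apply ContinuousOn.mul
    · exact ((hlam_cont.comp hc_cont hmaps).inv₀
        (fun τ hτ => (hlam_pos _ (hcU τ hτ)).ne'))
    · exact (hDlam_cont.comp hc_cont hmaps).clm_apply hc'
  have hφ_cont : ContinuousOn (fun τ => φ (c τ) (c' τ)) (Set.Icc (0:ℝ) 1) :=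
    (hφ.comp hc_cont hmaps).clm_apply hc'
  have hsub : Set.uIcc (0:ℝ) t ⊆ Set.Icc (0:ℝ) 1 := by
    rw [Set.uIcc_of_le ht.1]
    exact Set.Icc_subset_Icc le_rfl ht.2
  -- derivative of log ∘ lam ∘ c
  have hg : ∀ τ ∈ Set.uIcc (0:ℝ) t,
      HasDerivAt (fun τ => Real.log (lam (c τ))) (f τ) τ := by
    intro τ hτ
    have hτ' := hsub hτ
    have h1 : HasDerivAt (fun τ => lam (c τ)) (Dlam (c τ) (c' τ)) τ :=
      (hlam_deriv _ (hcU τ hτ')).comp_hasDerivAt τ (hc τ hτ')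
    have h2 := (Real.hasDerivAt_log (hlam_pos _ (hcU τ hτ')).ne').comp τ h1
    simpa [hf, mul_comm, Function.comp_def] using h2
  have hf_int : IntervalIntegrable f MeasureTheory.volume 0 t :=
    (hf_cont.mono hsub).intervalIntegrable
  have hφ_int : IntervalIntegrable (fun τ => φ (c τ) (c' τ)) MeasureTheory.volume 0 t :=
    (hφ_cont.mono hsub).intervalIntegrable
  have hFTC : ∫ τ in (0:ℝ)..t, f τ
      = Real.log (lam (c t)) - Real.log (lam (c 0)) :=
    intervalIntegral.integral_eq_sub_of_hasDerivAt hg hf_int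
  have hcongr : ∫ τ in (0:ℝ)..t, φt (c τ) (c' τ)
      = ∫ τ in (0:ℝ)..t, (φ (c τ) (c' τ) - f τ) := by
    apply intervalIntegral.integral_congr
    intro τ hτ
    exact hφt _ (hcU τ (hsub hτ)) _
  have hintsub : ∫ τ in (0:ℝ)..t, (φ (c τ) (c' τ) - f τ)
      = (∫ τ in (0:ℝ)..t, φ (c τ) (c' τ)) - ∫ τ in (0:ℝ)..t, f τ :=
    intervalIntegral.integral_sub hφ_int hf_int
  have h0 : 0 < lam (c 0) := hlam_pos _ (hcU 0 (by norm_num))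
  have h1 : 0 < lam (c t) := hlam_pos _ (hcU t ht)
  rw [hlt, hl, hcongr, hintsub, hFTC, sub_sub_eq_add_sub, Real.exp_sub,
    Real.exp_add, Real.exp_log h0, Real.exp_log h1]
  ring
end

section
/- Let E be a real normed vector space, U ⊆ E open, φ : U → (E →L[ℝ] ℝ) a continuous 1-form, g a map assigning to each point x ∈ U a symmetric bilinear form g_x : E × E → ℝ, λ : U → ℝ a positive C¹ function, and set g̃_x = λ(x)² g_x and φ̃ = φ − d ln λ. Let c : [0,1] → U be a C¹ curve and l, l̃ the length transfers of φ, φ̃ along c. Then for any vectors ξ, η ∈ E with g_{c(0)}(ξ, ξ) ≠ 0 and any t ∈ [0,1]: l̃(t)² · g̃_{c(t)}(η, η) / g̃_{c(0)}(ξ, ξ) = l(t)² · g_{c(t)}(η, η) / g_{c(0)}(ξ, ξ). That is, the length-transfer-corrected quotient of squared lengths of vectors at different points is independent of the gauge. -/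
/-- Weyl's gauge invariant comparison of length ratios (Lemma 1 of the paper):
the length-transfer-corrected quotient of squared lengths of vectors at different
points is independent of the gauge. -/
theorem gauge_invariant_length_comparison
    {E : Type*} [NormedAddCommGroup E] [NormedSpace ℝ E]
    (U : Set E) (hU : IsOpen U)
    (φ : E → (E →L[ℝ] ℝ)) (hφ : ContinuousOn φ U)
    (g : E → (E →ₗ[ℝ] E →ₗ[ℝ] ℝ))
    (hg_symm : ∀ x ∈ U, ∀ ξ η : E, g x ξ η = g x η ξ)
    (lam : E → ℝ) (Dlam : E → (E →L[ℝ] ℝ))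
    (hlam_pos : ∀ x ∈ U, 0 < lam x)
    (hlam_deriv : ∀ x ∈ U, HasFDerivAt lam (Dlam x) x)
    (hDlam_cont : ContinuousOn Dlam U)
    (gt : E → (E →ₗ[ℝ] E →ₗ[ℝ] ℝ))
    (hgt : ∀ x ∈ U, ∀ ξ η : E, gt x ξ η = (lam x) ^ 2 * g x ξ η)
    (φt : E → (E →L[ℝ] ℝ))
    (hφt : ∀ x ∈ U, ∀ v : E, φt x v = φ x v - (lam x)⁻¹ * Dlam x v)
    (c : ℝ → E) (c' : ℝ → E)
    (hcU : ∀ t ∈ Set.Icc (0:ℝ) 1, c t ∈ U)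
    (hc : ∀ t ∈ Set.Icc (0:ℝ) 1, HasDerivAt c (c' t) t)
    (hc' : ContinuousOn c' (Set.Icc (0:ℝ) 1))
    (l lt : ℝ → ℝ)
    (hl : ∀ t, l t = Real.exp (∫ τ in (0:ℝ)..t, φ (c τ) (c' τ)))
    (hlt : ∀ t, lt t = Real.exp (∫ τ in (0:ℝ)..t, φt (c τ) (c' τ)))
    (ξ η : E) (hξ : g (c 0) ξ ξ ≠ 0) :
    ∀ t ∈ Set.Icc (0:ℝ) 1,
      (lt t) ^ 2 * gt (c t) η η / gt (c 0) ξ ξ =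
        (l t) ^ 2 * g (c t) η η / g (c 0) ξ ξ := by

  intro t ht
  obtain ⟨ht0, ht1⟩ := ht
  have h0I : (0:ℝ) ∈ Set.Icc (0:ℝ) 1 := ⟨le_rfl, zero_le_one⟩
  have htI : t ∈ Set.Icc (0:ℝ) 1 := ⟨ht0, ht1⟩
  have hsub : Set.uIcc (0:ℝ) t ⊆ Set.Icc 0 1 := by
    rw [Set.uIcc_of_le ht0]; exact Set.Icc_subset_Icc le_rfl ht1
  have hcCont : ContinuousOn c (Set.Icc 0 1) :=
    fun s hs => (hc s hs).continuousAt.continuousWithinAt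
  have hlamCont : ContinuousOn lam U :=
    fun x hx => (hlam_deriv x hx).continuousAt.continuousWithinAt
  have hφc : ContinuousOn (fun τ => φ (c τ) (c' τ)) (Set.Icc 0 1) :=
    ContinuousOn.clm_apply (hφ.comp hcCont hcU) hc'
  have hDc : ContinuousOn (fun τ => (lam (c τ))⁻¹ * Dlam (c τ) (c' τ)) (Set.Icc 0 1) := by
    apply ContinuousOn.mul
    · apply ContinuousOn.inv₀ (hlamCont.comp hcCont hcU)
      exact fun τ hτ => (hlam_pos _ (hcU τ hτ)).ne'
    · exact ContinuousOn.clm_apply (hDlam_cont.comp hcCont hcU) hc'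
  have hint1 : IntervalIntegrable (fun τ => φ (c τ) (c' τ)) MeasureTheory.volume 0 t :=
    (hφc.mono hsub).intervalIntegrable
  have hint2 : IntervalIntegrable (fun τ => (lam (c τ))⁻¹ * Dlam (c τ) (c' τ))
      MeasureTheory.volume 0 t := (hDc.mono hsub).intervalIntegrable
  have hlog : (∫ τ in (0:ℝ)..t, (lam (c τ))⁻¹ * Dlam (c τ) (c' τ))
      = Real.log (lam (c t)) - Real.log (lam (c 0)) := by
    apply intervalIntegral.integral_eq_sub_of_hasDerivAt
    · intro s hs
      have hsI : s ∈ Set.Icc (0:ℝ) 1 := hsub hs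
      have h1 : HasDerivAt (fun τ => lam (c τ)) (Dlam (c s) (c' s)) s :=
        (hlam_deriv _ (hcU s hsI)).comp_hasDerivAt s (hc s hsI)
      have h2 := (Real.hasDerivAt_log (hlam_pos _ (hcU s hsI)).ne').comp s h1
      exact h2
    · exact hint2
  have hlam0 := hlam_pos _ (hcU 0 h0I)
  have hlamt := hlam_pos _ (hcU t htI)
  have hintt : (∫ τ in (0:ℝ)..t, φt (c τ) (c' τ))
      = (∫ τ in (0:ℝ)..t, φ (c τ) (c' τ))
        - (Real.log (lam (c t)) - Real.log (lam (c 0))) := by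
    rw [← hlog, ← intervalIntegral.integral_sub hint1 hint2]
    apply intervalIntegral.integral_congr
    intro τ hτ
    exact hφt _ (hcU τ (hsub hτ)) _
  have hltl : lt t = l t * (lam (c 0) / lam (c t)) := by
    rw [hlt, hl, hintt, Real.exp_sub, Real.exp_sub, Real.exp_log hlamt, Real.exp_log hlam0,
      div_div_eq_mul_div, mul_div_assoc]
  rw [hgt _ (hcU t htI), hgt _ (hcU 0 h0I), hltl]
  field_simp
end

section
/- Let E be a real normed vector space, U ⊆ E open, and φ : U → (E →L[ℝ] ℝ) a 1-form. (i) There exists a positive differentiable function λ : U → ℝ with φ(x) = λ(x)⁻¹ · Dλ(x) for all x ∈ U (so that the gauge-transformed length connection φ̃ = φ − d ln λ vanishes identically, i.e. the gauge is semi-Riemannian) if and only if φ is exact, i.e. φ = DF for some differentiable F : U → ℝ. (ii) If U is preconnected and λ₁, λ₂ are two positive differentiable functions on U with λ₁⁻¹ Dλ₁ = λ₂⁻¹ Dλ₂ = φ, then there is a constant C > 0 with λ₁ = C · λ₂; that is, two semi-Riemannian gauges differ only by a constant on each connected component. -/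
/-- A function with zero Fréchet derivative at every point of an open
preconnected set is constant on that set. -/
lemma const_of_hasFDerivAt_zero
    {E : Type*} [NormedAddCommGroup E] [NormedSpace ℝ E]
    {U : Set E} (hU : IsOpen U) (hUc : IsPreconnected U)
    {h : E → ℝ} (hd : ∀ x ∈ U, HasFDerivAt h (0 : E →L[ℝ] ℝ) x)
    {x₀ : E} (hx₀ : U) (hx₀U : x₀ ∈ U) : ∀ x ∈ U, h x = h x₀ := by
  -- locally constant on balls
  have loc : ∀ x ∈ U, ∃ ε > 0, Metric.ball x ε ⊆ U ∧
      ∀ y ∈ Metric.ball x ε, h y = h x := by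
    intro x hx
    obtain ⟨ε, hε, hball⟩ := Metric.isOpen_iff.mp hU x hx
    refine ⟨ε, hε, hball, fun y hy => ?_⟩
    have hconv : Convex ℝ (Metric.ball x ε) := convex_ball x ε
    have hdiff : DifferentiableOn ℝ h (Metric.ball x ε) := fun z hz =>
      ((hd z (hball hz)).differentiableAt).differentiableWithinAt
    refine hconv.is_const_of_fderivWithin_eq_zero hdiff (fun z hz => ?_) hy
      (Metric.mem_ball_self hε)
    rw [fderivWithin_of_isOpen Metric.isOpen_ball hz]
    exact (hd z (hball hz)).fderiv
  set S : Set E := {x | ∃ ε > 0, Metric.ball x ε ⊆ U ∧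
      (∀ y ∈ Metric.ball x ε, h y = h x) ∧ h x = h x₀} with hS
  set T : Set E := {x | ∃ ε > 0, Metric.ball x ε ⊆ U ∧
      (∀ y ∈ Metric.ball x ε, h y = h x) ∧ h x ≠ h x₀} with hT
  have hSopen : IsOpen S := by
    rw [Metric.isOpen_iff]
    rintro x ⟨ε, hε, hball, hconst, hval⟩
    refine ⟨ε, hε, fun y hy => ?_⟩
    obtain ⟨δ, hδ, hball', hconst'⟩ := loc y (hball hy)
    exact ⟨δ, hδ, hball', hconst', (hconst y hy).trans hval⟩
  have hTopen : IsOpen T := by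
    rw [Metric.isOpen_iff]
    rintro x ⟨ε, hε, hball, hconst, hval⟩
    refine ⟨ε, hε, fun y hy => ?_⟩
    obtain ⟨δ, hδ, hball', hconst'⟩ := loc y (hball hy)
    exact ⟨δ, hδ, hball', hconst', (hconst y hy).trans_ne hval⟩
  have hsub : U ⊆ S ∪ T := by
    intro x hx
    obtain ⟨ε, hε, hball, hconst⟩ := loc x hx
    by_cases hc : h x = h x₀
    · exact Or.inl ⟨ε, hε, hball, hconst, hc⟩
    · exact Or.inr ⟨ε, hε, hball, hconst, hc⟩
  have hx₀S : x₀ ∈ S := by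
    obtain ⟨ε, hε, hball, hconst⟩ := loc x₀ hx₀U
    exact ⟨ε, hε, hball, hconst, rfl⟩
  intro x hx
  by_contra hne
  have hxT : x ∈ T := by
    obtain ⟨ε, hε, hball, hconst⟩ := loc x hx
    exact ⟨ε, hε, hball, hconst, hne⟩
  obtain ⟨z, ⟨hzU, hzS, hzT⟩⟩ := hUc S T hSopen hTopen hsub ⟨x₀, hx₀U, hx₀S⟩ ⟨x, hx, hxT⟩
  obtain ⟨_, _, _, _, hvS⟩ := hzS
  obtain ⟨_, _, _, _, hvT⟩ := hzT
  exact hvT hvS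

/-- Exactness formulation of Weyl's theorem on semi-Riemannian gauges:
(i) there is a positive differentiable gauge factor `λ` with `φ = λ⁻¹·Dλ`
(so that `φ̃ = φ − d ln λ = 0`, a semi-Riemannian gauge) iff `φ` is exact;
(ii) on a preconnected `U`, two such gauge factors differ by a positive constant. -/
theorem semi_riemannian_gauge_iff_exact
    {E : Type*} [NormedAddCommGroup E] [NormedSpace ℝ E]
    (U : Set E) (hU : IsOpen U)
    (φ : E → (E →L[ℝ] ℝ)) :
    ((∃ lam : E → ℝ, (∀ x ∈ U, 0 < lam x) ∧
        (∀ x ∈ U, HasFDerivAt lam (lam x • φ x) x)) ↔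
      (∃ F : E → ℝ, ∀ x ∈ U, HasFDerivAt F (φ x) x)) ∧
    (IsPreconnected U →
      ∀ lam₁ lam₂ : E → ℝ,
        (∀ x ∈ U, 0 < lam₁ x) → (∀ x ∈ U, HasFDerivAt lam₁ (lam₁ x • φ x) x) →
        (∀ x ∈ U, 0 < lam₂ x) → (∀ x ∈ U, HasFDerivAt lam₂ (lam₂ x • φ x) x) →
        ∃ C : ℝ, 0 < C ∧ ∀ x ∈ U, lam₁ x = C * lam₂ x) := by
  have logderiv : ∀ (lam : E → ℝ), (∀ x ∈ U, 0 < lam x) →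
      (∀ x ∈ U, HasFDerivAt lam (lam x • φ x) x) →
      ∀ x ∈ U, HasFDerivAt (fun y => Real.log (lam y)) (φ x) x := by
    intro lam hpos hder x hx
    have h1 := (Real.hasDerivAt_log (ne_of_gt (hpos x hx))).comp_hasFDerivAt x (hder x hx)
    have : (lam x)⁻¹ • (lam x • φ x) = φ x := by
      rw [smul_smul, inv_mul_cancel₀ (ne_of_gt (hpos x hx)), one_smul]
    rwa [this] at h1
  constructor
  · constructor
    · rintro ⟨lam, hpos, hder⟩
      exact ⟨fun y => Real.log (lam y), logderiv lam hpos hder⟩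
    · rintro ⟨F, hF⟩
      refine ⟨fun y => Real.exp (F y), fun x _ => Real.exp_pos _, fun x hx => ?_⟩
      exact (Real.hasDerivAt_exp (F x)).comp_hasFDerivAt x (hF x hx)
  · intro hUc lam₁ lam₂ hpos₁ hder₁ hpos₂ hder₂
    rcases Set.eq_empty_or_nonempty U with hUe | ⟨x₀, hx₀⟩
    · exact ⟨1, one_pos, fun x hx => by simp [hUe] at hx⟩
    · set h : E → ℝ := fun y => Real.log (lam₁ y) - Real.log (lam₂ y) with hh
      have hderiv : ∀ x ∈ U, HasFDerivAt h (0 : E →L[ℝ] ℝ) x := by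
        intro x hx
        have := (logderiv lam₁ hpos₁ hder₁ x hx).sub (logderiv lam₂ hpos₂ hder₂ x hx)
        rw [sub_self] at this
        exact this
      have hconst := const_of_hasFDerivAt_zero hU hUc hderiv ⟨x₀, hx₀⟩ hx₀
      refine ⟨lam₁ x₀ / lam₂ x₀, div_pos (hpos₁ x₀ hx₀) (hpos₂ x₀ hx₀), fun x hx => ?_⟩
      have hc := hconst x hx
      have h1 : Real.exp (h x) = lam₁ x / lam₂ x := by
        rw [hh]
        rw [Real.exp_sub, Real.exp_log (hpos₁ x hx), Real.exp_log (hpos₂ x hx)]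
      have h2 : Real.exp (h x₀) = lam₁ x₀ / lam₂ x₀ := by
        rw [hh]
        rw [Real.exp_sub, Real.exp_log (hpos₁ x₀ hx₀), Real.exp_log (hpos₂ x₀ hx₀)]
      have heq : lam₁ x / lam₂ x = lam₁ x₀ / lam₂ x₀ := h1.symm.trans (by rw [hc, h2])
      rw [div_eq_iff (ne_of_gt (hpos₂ x hx))] at heq
      exact heq
end

section
/- Let E be a real normed vector space, U ⊆ E open, φ : U → (E →L[ℝ] ℝ) a 1-form, and f : U → ℝ a differentiable function with f(x) ≠ 0 for all x ∈ U. If the covariant derivative of f (as a scalar Weyl field of weight 1) vanishes, i.e. Df(x) − f(x) · φ(x) = 0 as a linear functional for every x ∈ U, then φ(x) = D(ln |f|)(x) for all x ∈ U; in particular φ is exact, so the length connection is integrable (the Weylian manifold is semi-Riemannian locally). -/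
/-- Audretsch/Gähler/Straumann (Lemma 2 of the paper): if a nowhere-vanishing
scalar Weyl field `f` of weight 1 has vanishing covariant derivative
`Df − f·φ = 0`, then `φ = D(ln |f|)`; in particular `φ` is exact, i.e. the
length connection is integrable. -/
theorem integrable_of_covariantly_constant_scalar
    {E : Type*} [NormedAddCommGroup E] [NormedSpace ℝ E]
    (U : Set E) (hU : IsOpen U)
    (φ : E → (E →L[ℝ] ℝ))
    (f : E → ℝ) (Df : E → (E →L[ℝ] ℝ))
    (hf_ne : ∀ x ∈ U, f x ≠ 0)
    (hf_deriv : ∀ x ∈ U, HasFDerivAt f (Df x) x)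
    (hcov : ∀ x ∈ U, Df x - f x • φ x = 0) :
    ∀ x ∈ U, HasFDerivAt (fun y => Real.log |f y|) (φ x) x := by
  intro x hx
  have hD : Df x = f x • φ x := sub_eq_zero.mp (hcov x hx)
  have hlog : HasFDerivAt (fun y => Real.log (f y)) ((f x)⁻¹ • Df x) x :=
    (hf_deriv x hx).log (hf_ne x hx)
  have hφ : (f x)⁻¹ • Df x = φ x := by
    rw [hD, smul_smul, inv_mul_cancel₀ (hf_ne x hx), one_smul]
  rw [hφ] at hlog
  have : (fun y => Real.log |f y|) = fun y => Real.log (f y) := by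
    funext y; rw [Real.log_abs]
  rw [this]
  exact hlog
end

section
/- Let I ⊆ ℝ be an open interval, κ ∈ ℝ, and f : I → ℝ a C² function with f(τ) > 0 for all τ ∈ I. Suppose the Robertson–Walker scalar curvature expression R̃(τ) := 6·((f'(τ)/f(τ))² + κ/f(τ)² + f''(τ)/f(τ)) is nonzero for every τ ∈ I. Then the following are equivalent: (a) there exists a constant c > 0 such that |R̃(τ)| = c / f(τ)² for all τ ∈ I (i.e. the Weyl gauge factor √|R̃| is proportional to the Hubble gauge factor 1/f, so Hubble gauge and Weyl gauge coincide); (b) there exists b ∈ ℝ such that f''(τ)·ف(τ) + f'(τ)² = b for all τ ∈ I. In particular (a) holds whenever f' is constant on I (the case of a time-homogeneous Hubble form). -/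
/-- Proposition 1 of the paper: in a Robertson–Walker–Weyl manifold with warp
function `f > 0` and spatial curvature `κ`, Hubble gauge and Weyl gauge coincide
(i.e. `|R̃| = c/f²` for a constant `c > 0`, where `R̃` is the scalar curvature in
semi-Riemannian gauge) iff `f''·f + f'² = const`; in particular they coincide
whenever `f'` is constant (time-homogeneous Hubble form). -/
theorem hubble_gauge_eq_weyl_gauge_iff
    (I : Set ℝ) (hI_open : IsOpen I) (hI_conn : I.OrdConnected)
    (κ : ℝ) (f f' f'' : ℝ → ℝ)
    (hf_pos : ∀ τ ∈ I, 0 < f τ)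
    (hf : ∀ τ ∈ I, HasDerivAt f (f' τ) τ)
    (hf' : ∀ τ ∈ I, HasDerivAt f' (f'' τ) τ)
    (hf''_cont : ContinuousOn f'' I)
    (Rt : ℝ → ℝ)
    (hRt : ∀ τ ∈ I, Rt τ = 6 * ((f' τ / f τ) ^ 2 + κ / (f τ) ^ 2 + f'' τ / f τ))
    (hRt_ne : ∀ τ ∈ I, Rt τ ≠ 0) :
    ((∃ c : ℝ, 0 < c ∧ ∀ τ ∈ I, |Rt τ| = c / (f τ) ^ 2) ↔
      (∃ b : ℝ, ∀ τ ∈ I, f'' τ * f τ + (f' τ) ^ 2 = b)) ∧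
    ((∃ k : ℝ, ∀ τ ∈ I, f' τ = k) →
      ∃ c : ℝ, 0 < c ∧ ∀ τ ∈ I, |Rt τ| = c / (f τ) ^ 2) := by
  classical
  set g : ℝ → ℝ := fun τ => f'' τ * f τ + (f' τ) ^ 2 + κ with hg_def
  have hIpre : IsPreconnected I := hI_conn.isPreconnected
  have hf_cont : ContinuousOn f I := fun τ hτ => (hf τ hτ).continuousAt.continuousWithinAt
  have hf'_cont : ContinuousOn f' I := fun τ hτ => (hf' τ hτ).continuousAt.continuousWithinAt
  have hg_cont : ContinuousOn g I := by
    apply ContinuousOn.add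
    apply ContinuousOn.add (hf''_cont.mul hf_cont) (hf'_cont.pow 2)
    exact continuousOn_const
  have hRtg : ∀ τ ∈ I, Rt τ = 6 * g τ / (f τ) ^ 2 := by
    intro τ hτ
    have hfne : f τ ≠ 0 := (hf_pos τ hτ).ne'
    rw [hRt τ hτ, hg_def]
    field_simp
    ring
  have hg_ne : ∀ τ ∈ I, g τ ≠ 0 := by
    intro τ hτ hg0
    apply hRt_ne τ hτ
    rw [hRtg τ hτ, hg0]; simp
  have habs : ∀ τ ∈ I, |Rt τ| = 6 * |g τ| / (f τ) ^ 2 := by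
    intro τ hτ
    have hfp : (0:ℝ) < (f τ) ^ 2 := pow_pos (hf_pos τ hτ) 2
    rw [hRtg τ hτ, abs_div, abs_mul, abs_of_pos hfp]
    norm_num
  -- sign constancy of g via intermediate value
  have hsign : ∀ τ0 ∈ I, ∀ τ ∈ I, g τ = -g τ0 → g τ = g τ0 := by
    intro τ0 hτ0 τ hτ hneg
    rcases lt_trichotomy (g τ0) 0 with h0 | h0 | h0
    · exfalso
      have h02 : (0:ℝ) ∈ Set.Icc (g τ0) (g τ) := by
        constructor
        · exact le_of_lt h0
        · rw [hneg]; linarith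
      rcases hIpre.intermediate_value hτ0 hτ hg_cont h02 with ⟨x, hx, hgx⟩
      exact hg_ne x hx hgx
    · exact absurd h0 (hg_ne τ0 hτ0)
    · exfalso
      have h02 : (0:ℝ) ∈ Set.Icc (g τ) (g τ0) := by
        constructor
        · rw [hneg]; linarith
        · exact le_of_lt h0
      rcases hIpre.intermediate_value hτ hτ0 hg_cont h02 with ⟨x, hx, hgx⟩
      exact hg_ne x hx hgx
  have main : (∃ c : ℝ, 0 < c ∧ ∀ τ ∈ I, |Rt τ| = c / (f τ) ^ 2) ↔
      (∃ b : ℝ, ∀ τ ∈ I, f'' τ * f τ + (f' τ) ^ 2 = b) := by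
    constructor
    · rintro ⟨c, hc, hceq⟩
      rcases Set.eq_empty_or_nonempty I with hI | ⟨τ0, hτ0⟩
      · exact ⟨0, by simp [hI]⟩
      refine ⟨g τ0 - κ, fun τ hτ => ?_⟩
      have key : ∀ σ ∈ I, |g σ| = c / 6 := by
        intro σ hσ
        have h1 := hceq σ hσ
        rw [habs σ hσ] at h1
        have hfp : (0:ℝ) < (f σ) ^ 2 := pow_pos (hf_pos σ hσ) 2
        field_simp at h1 ⊢
        rw [div_left_inj' hfp.ne'] at h1
        linarith
      have habs2 : |g τ| = |g τ0| := by rw [key τ hτ, key τ0 hτ0]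
      have : g τ = g τ0 := by
        rcases abs_eq_abs.mp habs2 with h | h
        · exact h
        · exact hsign τ0 hτ0 τ hτ h
      rw [hg_def] at this
      simp only at this
      have h2 : g τ0 = f'' τ0 * f τ0 + f' τ0 ^ 2 + κ := rfl
      rw [h2]
      linarith
    · rintro ⟨b, hb⟩
      rcases Set.eq_empty_or_nonempty I with hI | ⟨τ0, hτ0⟩
      · exact ⟨1, one_pos, by simp [hI]⟩
      have hbk : b + κ ≠ 0 := by
        have := hg_ne τ0 hτ0
        rw [hg_def] at this
        simp only at this
        have h2 := hb τ0 hτ0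
        intro h; apply this; linarith
      refine ⟨6 * |b + κ|, by positivity, fun τ hτ => ?_⟩
      have : g τ = b + κ := by
        have := hb τ hτ
        rw [hg_def]; simp only; linarith
      rw [habs τ hτ, this]
  refine ⟨main, ?_⟩
  rintro ⟨k, hk⟩
  apply main.mpr
  refine ⟨k ^ 2, fun τ hτ => ?_⟩
  have hf''0 : f'' τ = 0 := by
    have hev : f' =ᶠ[nhds τ] (fun _ => k) :=
      Filter.eventuallyEq_of_mem (hI_open.mem_nhds hτ) (fun x hx => hk x hx)
    have h1 : HasDerivAt (fun _ : ℝ => k) (f'' τ) τ := (hf' τ hτ).congr_of_eventuallyEq hev.symm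
    exact (h1.unique (hasDerivAt_const τ k))
  rw [hf''0, hk τ hτ]; ring
end

section
/- Let E be a real normed vector space, U ⊆ E open, φ : U → (E →L[ℝ] ℝ) a continuous 1-form, g a field of symmetric bilinear forms on E indexed by points of U, X : U → E a vector field, and γ : [0,1] → U a C¹ curve. Let l be the length transfer of φ along γ with l(0) = 1, and define α(t) = l(t)² · g_{γ(t)}(γ'(t), X(γ(t))). Let λ : U → ℝ be a positive C¹ gauge factor and consider the transformed data g̃ = λ² g, φ̃ = φ − d ln λ, X̃ = λ⁻¹ X, with corresponding length transfer l̃ (l̃(0) = 1) and α̃(t) = l̃(t)² · g̃_{γ(t)}(γ'(t), X̃(γ(t))). If α(1) ≠ 0, then α̃(1) ≠ 0 and l̃(1) · α̃(0) / α̃(1) = l(1) · α(0) / α(1). That is, the redshift function z defined by z + 1 = l(1)·α(0)/α(1) is gauge invariant. -/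
/-- Lemma 5 of the paper (gauge invariance of the redshift function): with
`α(t) = l(t)² g_{γ(t)}(γ'(t), X(γ(t)))` and the gauge-transformed data
`g̃ = λ²g`, `φ̃ = φ − d ln λ`, `X̃ = λ⁻¹X`, if `α(1) ≠ 0` then `α̃(1) ≠ 0` and
`l̃(1)·α̃(0)/α̃(1) = l(1)·α(0)/α(1)`; i.e. the redshift `z + 1 = l(1)·α(0)/α(1)`
is gauge invariant. -/
theorem redshift_gauge_invariance
    {E : Type*} [NormedAddCommGroup E] [NormedSpace ℝ E]
    (U : Set E) (hU : IsOpen U)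
    (φ : E → (E →L[ℝ] ℝ)) (hφ : ContinuousOn φ U)
    (g : E → (E →ₗ[ℝ] E →ₗ[ℝ] ℝ))
    (hg_symm : ∀ x ∈ U, ∀ ξ η : E, g x ξ η = g x η ξ)
    (X : E → E)
    (γ : ℝ → E) (γ' : ℝ → E)
    (hγU : ∀ t ∈ Set.Icc (0:ℝ) 1, γ t ∈ U)
    (hγ : ∀ t ∈ Set.Icc (0:ℝ) 1, HasDerivAt γ (γ' t) t)
    (hγ' : ContinuousOn γ' (Set.Icc (0:ℝ) 1))
    (lam : E → ℝ) (Dlam : E → (E →L[ℝ] ℝ))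
    (hlam_pos : ∀ x ∈ U, 0 < lam x)
    (hlam_deriv : ∀ x ∈ U, HasFDerivAt lam (Dlam x) x)
    (hDlam_cont : ContinuousOn Dlam U)
    (gt : E → (E →ₗ[ℝ] E →ₗ[ℝ] ℝ))
    (hgt : ∀ x ∈ U, ∀ ξ η : E, gt x ξ η = (lam x) ^ 2 * g x ξ η)
    (φt : E → (E →L[ℝ] ℝ))
    (hφt : ∀ x ∈ U, ∀ v : E, φt x v = φ x v - (lam x)⁻¹ * Dlam x v)
    (Xt : E → E) (hXt : ∀ x ∈ U, Xt x = (lam x)⁻¹ • X x)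
    (l lt : ℝ → ℝ)
    (hl : ∀ t, l t = Real.exp (∫ τ in (0:ℝ)..t, φ (γ τ) (γ' τ)))
    (hlt : ∀ t, lt t = Real.exp (∫ τ in (0:ℝ)..t, φt (γ τ) (γ' τ)))
    (α αt : ℝ → ℝ)
    (hα : ∀ t, α t = (l t) ^ 2 * g (γ t) (γ' t) (X (γ t)))
    (hαt : ∀ t, αt t = (lt t) ^ 2 * gt (γ t) (γ' t) (Xt (γ t)))
    (hα1 : α 1 ≠ 0) :
    αt 1 ≠ 0 ∧ lt 1 * αt 0 / αt 1 = l 1 * α 0 / α 1 := by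

  have h01 : Set.uIcc (0:ℝ) 1 = Set.Icc 0 1 := Set.uIcc_of_le zero_le_one
  have hγc : ContinuousOn γ (Set.Icc 0 1) := fun t ht =>
    (hγ t ht).continuousAt.continuousWithinAt
  have hγm : Set.MapsTo γ (Set.Icc 0 1) U := hγU
  -- positivity at endpoints
  have h0U : γ 0 ∈ U := hγU 0 (by norm_num)
  have h1U : γ 1 ∈ U := hγU 1 (by norm_num)
  have hp0 : 0 < lam (γ 0) := hlam_pos _ h0U
  have hp1 : 0 < lam (γ 1) := hlam_pos _ h1U
  set p0 := lam (γ 0) with hp0def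
  set p1 := lam (γ 1) with hp1def
  -- continuity of integrands
  have contφ : ContinuousOn (fun t => φ (γ t) (γ' t)) (Set.Icc 0 1) :=
    ((hφ.comp hγc hγm).clm_apply hγ')
  have contlam : ContinuousOn (fun t => lam (γ t)) (Set.Icc 0 1) := fun t ht =>
    ((hlam_deriv (γ t) (hγU t ht)).continuousAt.comp
      (hγ t ht).continuousAt).continuousWithinAt
  have contD : ContinuousOn (fun t => (lam (γ t))⁻¹ * Dlam (γ t) (γ' t)) (Set.Icc 0 1) := by
    refine ContinuousOn.mul (contlam.inv₀ ?_) ((hDlam_cont.comp hγc hγm).clm_apply hγ')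
    exact fun t ht => (hlam_pos _ (hγU t ht)).ne'
  have intφ : IntervalIntegrable (fun t => φ (γ t) (γ' t)) MeasureTheory.volume 0 1 :=
    ((h01 ▸ contφ).intervalIntegrable)
  have intD : IntervalIntegrable (fun t => (lam (γ t))⁻¹ * Dlam (γ t) (γ' t))
      MeasureTheory.volume 0 1 :=
    ((h01 ▸ contD).intervalIntegrable)
  -- FTC: the logarithmic integral
  have hFTC : (∫ τ in (0:ℝ)..1, (lam (γ τ))⁻¹ * Dlam (γ τ) (γ' τ))
      = Real.log p1 - Real.log p0 := by
    have := intervalIntegral.integral_eq_sub_of_hasDerivAt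
      (f := fun s => Real.log (lam (γ s)))
      (f' := fun t => (lam (γ t))⁻¹ * Dlam (γ t) (γ' t)) (a := (0:ℝ)) (b := 1)
      ?_ intD
    · exact this
    · intro t ht
      rw [h01] at ht
      have hcomp : HasDerivAt (fun s => lam (γ s)) (Dlam (γ t) (γ' t)) t :=
        (hlam_deriv (γ t) (hγU t ht)).comp_hasDerivAt t (hγ t ht)
      have := (Real.hasDerivAt_log (hlam_pos _ (hγU t ht)).ne').comp t hcomp
      simpa [mul_comm, Function.comp_def] using this
  -- value of lt 1
  have hint_eq : (∫ τ in (0:ℝ)..1, φt (γ τ) (γ' τ))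
      = (∫ τ in (0:ℝ)..1, φ (γ τ) (γ' τ)) - (Real.log p1 - Real.log p0) := by
    rw [← hFTC, ← intervalIntegral.integral_sub intφ intD]
    refine intervalIntegral.integral_congr ?_
    intro t ht
    rw [h01] at ht
    exact hφt (γ t) (hγU t ht) (γ' t)
  have hlt1 : lt 1 = l 1 * (p0 / p1) := by
    rw [hlt, hl, hint_eq, Real.exp_sub, Real.exp_sub, Real.exp_log hp1, Real.exp_log hp0]
    field_simp
  -- values at 0
  have hl0 : l 0 = 1 := by simp [hl]
  have hlt0 : lt 0 = 1 := by simp [hlt]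
  -- rewrite αt in terms of α
  have hXt0 := hXt (γ 0) h0U
  have hXt1 := hXt (γ 1) h1U
  have hαt0 : αt 0 = p0 * α 0 := by
    rw [hαt, hα, hlt0, hl0, hgt (γ 0) h0U, hXt0]
    simp only [map_smul, smul_eq_mul]
    rw [hp0def]
    field_simp
  have hαt1 : αt 1 = (p0 ^ 2 / p1) * α 1 := by
    rw [hαt, hα, hlt1, hgt (γ 1) h1U, hXt1]
    simp only [map_smul, smul_eq_mul]
    rw [hp1def]
    field_simp
  have hαt1ne : αt 1 ≠ 0 := by
    rw [hαt1]
    exact mul_ne_zero (by positivity) hα1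
  refine ⟨hαt1ne, ?_⟩
  rw [hαt0, hαt1, hlt1]
  field_simp
end
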